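/- The hypothesis class constructed in the proof of Proposition 1 satisfies the margin weak-learning condition WL_MRBoost with τ = 1/5: For every Borel probability measure μ on ℝ with μ([−1, 1]) = 1, there exists θ ∈ [−1, 9/10] such that μ({x ∈ ℝ : h_θ(x) = 1}) ≥ μ({x ∈ ℝ : h_θ(x) = 0}) + 1/5; moreover this θ satisfies μ({x : h_θ(x) = 1}) ≥ 3/5 = (1 + 1/5)/2. -/

import Mathlib

open MeasureTheory ENNReal

/-- The binary classifier `h_θ` from the proof of Proposition 1: it outputs `0` on the
interval `[θ, θ + 1/10]` and `1` elsewhere. -/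
noncomputable def hClf (θ : ℝ) : ℝ → Fin 2 := fun x =>
  if θ ≤ x ∧ x ≤ θ + 1 / 10 then 0 else 1


lemma e_fifth (a b : ENNReal) : a/5 + b/5 = (a+b)/5 := ENNReal.div_add_div_same
lemma e_five_five : (5:ENNReal)/5 = 1 := ENNReal.div_self (by norm_num) (by norm_num)
lemma e_25_35 : (2:ENNReal)/5 + 3/5 = 1 := by rw [e_fifth]; norm_num [e_five_five]
lemma e_ne_top : (2:ENNReal)/5 ≠ ⊤ := by
  simp [ENNReal.div_eq_top]
lemma e_25_15 : (2:ENNReal)/5 + 1/5 = 3/5 := by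
  rw [e_fifth]; norm_num
lemma e_sixfifth : (2:ENNReal)/5 + 2/5 + 2/5 = 6/5 := by
  rw [e_fifth, e_fifth]; norm_num
lemma e_one_le : (1:ENNReal) ≤ 6/5 := by
  rw [← e_five_five]
  exact ENNReal.div_le_div_right (by norm_num) 5

lemma hClf_key (μ : Measure ℝ) [IsProbabilityMeasure μ] (θ : ℝ)
    (hp : μ (Set.Icc θ (θ + 1/10)) ≤ 2/5) :
    μ {x | hClf θ x = 1} ≥ μ {x | hClf θ x = 0} + 1 / 5 ∧
      μ {x | hClf θ x = 1} ≥ 3 / 5 := by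
  have h0 : {x | hClf θ x = 0} = Set.Icc θ (θ + 1/10) := by
    ext x
    simp only [hClf, Set.mem_setOf_eq, Set.mem_Icc]
    split
    · simp_all
    · simp_all
  have h1 : {x | hClf θ x = 1} = (Set.Icc θ (θ + 1/10))ᶜ := by
    ext x
    simp only [hClf, Set.mem_setOf_eq, Set.mem_compl_iff, Set.mem_Icc]
    split
    · simp_all
    · simp_all
  rw [h0, h1]
  set p := μ (Set.Icc θ (θ + 1/10)) with hpdef
  set q := μ (Set.Icc θ (θ + 1/10))ᶜ with hqdef
  have hsum : p + q = 1 := by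
    rw [hpdef, hqdef, measure_add_measure_compl measurableSet_Icc, measure_univ]
  have hq : q ≥ 3/5 := by
    have h2 : (1:ENNReal) ≤ 2/5 + q := by
      rw [← hsum]; exact add_le_add_left hp q
    have h3 : (2/5 : ENNReal) + 3/5 ≤ 2/5 + q := by
      calc (2/5 : ENNReal) + 3/5 = 1 := e_25_35
        _ ≤ 2/5 + q := h2
    exact (ENNReal.add_le_add_iff_left e_ne_top).mp h3
  refine ⟨?_, hq⟩
  calc p + 1/5 ≤ 2/5 + 1/5 := add_le_add_left hp _
    _ = 3/5 := e_25_15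
    _ ≤ q := hq

theorem hClf_satisfies_wl_mrboost (μ : Measure ℝ) [IsProbabilityMeasure μ]
    (h : μ (Set.Icc (-1) 1) = 1) :
    ∃ θ ∈ Set.Icc (-1 : ℝ) (9 / 10),
      μ {x | hClf θ x = 1} ≥ μ {x | hClf θ x = 0} + 1 / 5 ∧
      μ {x | hClf θ x = 1} ≥ 3 / 5 := by
  set s1 : Set ℝ := Set.Icc (-1) (-1 + 1/10)
  set s2 : Set ℝ := Set.Icc (-1/2) (-1/2 + 1/10)
  set s3 : Set ℝ := Set.Icc 0 (0 + 1/10)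
  have hd12 : Disjoint s1 s2 := by
    rw [Set.disjoint_left]; rintro x ⟨_, h1⟩ ⟨h2, _⟩
    linarith
  have hd13 : Disjoint s1 s3 := by
    rw [Set.disjoint_left]; rintro x ⟨_, h1⟩ ⟨h2, _⟩
    linarith
  have hd23 : Disjoint s2 s3 := by
    rw [Set.disjoint_left]; rintro x ⟨_, h1⟩ ⟨h2, _⟩
    linarith
  have hsum : μ s1 + μ s2 + μ s3 ≤ 1 := by
    have h12 : μ (s1 ∪ s2) = μ s1 + μ s2 := measure_union hd12 measurableSet_Icc
    have h123 : μ ((s1 ∪ s2) ∪ s3) = μ s1 + μ s2 + μ s3 := by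
      rw [measure_union (by exact Disjoint.union_left hd13 hd23) measurableSet_Icc, h12]
    calc μ s1 + μ s2 + μ s3 = μ ((s1 ∪ s2) ∪ s3) := h123.symm
      _ ≤ μ Set.univ := measure_mono (Set.subset_univ _)
      _ = 1 := measure_univ
  -- one of the three measures is ≤ 2/5
  rcases le_or_gt (μ s1) (2/5) with h1 | h1
  · exact ⟨-1, by norm_num, hClf_key μ (-1) h1⟩
  rcases le_or_gt (μ s2) (2/5) with h2 | h2
  · exact ⟨-1/2, by constructor <;> norm_num, hClf_key μ (-1/2) h2⟩
  have h3 : μ s3 ≤ 2/5 := by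
    by_contra h3
    push_neg at h3
    have : (2/5 : ENNReal) + 2/5 + 2/5 < μ s1 + μ s2 + μ s3 :=
      ENNReal.add_lt_add (ENNReal.add_lt_add h1 h2) h3
    have hlt : (2/5 : ENNReal) + 2/5 + 2/5 < 1 := lt_of_lt_of_le this hsum
    have : ¬ ((2/5 : ENNReal) + 2/5 + 2/5 < 1) := by
      intro hc
      have : (6/5 : ENNReal) < 1 := by
        have e : (2/5 : ENNReal) + 2/5 + 2/5 = 6/5 := e_sixfifth
        rwa [e] at hc
      have : ¬ ((6/5 : ENNReal) < 1) := not_lt.mpr e_one_le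
      exact this ‹_›
    exact this hlt
  exact ⟨0, by norm_num, hClf_key μ 0 h3⟩
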